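/- arXiv:2505.04807 — 9 statements merged into one kernel-verified Lean document; each statement's English description precedes it below -/
import Mathlib

section
/- Let H be a symmetric n×n real matrix, g ∈ ℝⁿ, σ > 0, μ ≥ 0, and s, r ∈ ℝⁿ with r = (H + (σ^{1/2}‖g‖ + μ)·I)s + g. Suppose sᵀ(H + μ·I)s ≥ 0 and rᵀs = 0. Then gᵀs + ½ sᵀHs ≤ −σ^{1/2}‖g‖‖s‖². -/
/-- Quadratic model decrease achieved by the doubly regularized Newton step. -/
theorem stmt_3 {n : ℕ}
    (H : EuclideanSpace ℝ (Fin n) →L[ℝ] EuclideanSpace ℝ (Fin n))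
    (hH : ∀ x y : EuclideanSpace ℝ (Fin n), (inner ℝ (H x) y : ℝ) = (inner ℝ x (H y) : ℝ))
    (g s r : EuclideanSpace ℝ (Fin n)) (σ μ : ℝ) (hσ : 0 < σ) (hμ : 0 ≤ μ)
    (hr : r = H s + (Real.sqrt σ * ‖g‖ + μ) • s + g)
    (hpos : 0 ≤ (inner ℝ s (H s) : ℝ) + μ * ‖s‖ ^ 2)
    (horth : (inner ℝ r s : ℝ) = 0) :
    (inner ℝ g s : ℝ) + (1 / 2) * (inner ℝ s (H s) : ℝ)
      ≤ -(Real.sqrt σ * ‖g‖ * ‖s‖ ^ 2) := by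
  rw [hr] at horth
  simp only [inner_add_left, real_inner_smul_left, real_inner_self_eq_norm_sq] at horth
  have hsym : (inner ℝ (H s) s : ℝ) = inner ℝ s (H s) := real_inner_comm _ _
  have hgs : (inner ℝ g s : ℝ) = inner ℝ s g := real_inner_comm _ _
  have hμs : 0 ≤ μ * ‖s‖ ^ 2 := mul_nonneg hμ (sq_nonneg _)
  nlinarith [horth, hpos]
end

section
/- Let H be a symmetric n×n real matrix, g ∈ ℝⁿ, and let σ > 0, θ ∈ (0,1], κ_C ≥ 1, μ > 0 with μ > κ_C σ^{1/2}‖g‖. Let u ∈ ℝⁿ satisfy gᵀu ≤ 0, ‖u‖ = 1, uᵀHu ≤ −θμ, and set s = (θκ_C/σ^{1/2})u. Then gᵀs + ½ sᵀHs ≤ −(1/2)θ³κ_C³‖g‖/σ^{1/2} = −(1/2)σ‖g‖‖s‖³. -/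
/-- Quadratic model decrease achieved by the scaled negative curvature step. -/
theorem stmt_4 {n : ℕ}
    (H : EuclideanSpace ℝ (Fin n) →L[ℝ] EuclideanSpace ℝ (Fin n))
    (hH : ∀ x y : EuclideanSpace ℝ (Fin n), (inner ℝ (H x) y : ℝ) = (inner ℝ x (H y) : ℝ))
    (g u s : EuclideanSpace ℝ (Fin n)) (σ θ κC μ : ℝ)
    (hσ : 0 < σ) (hθ : 0 < θ) (hθ1 : θ ≤ 1) (hκC : 1 ≤ κC)
    (hμ : 0 < μ) (hμbig : κC * Real.sqrt σ * ‖g‖ < μ)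
    (hgu : (inner ℝ g u : ℝ) ≤ 0) (hu : ‖u‖ = 1)
    (hcurv : (inner ℝ u (H u) : ℝ) ≤ -(θ * μ))
    (hs : s = (θ * κC / Real.sqrt σ) • u) :
    (inner ℝ g s : ℝ) + (1 / 2) * (inner ℝ s (H s) : ℝ)
        ≤ -((1 / 2) * θ ^ 3 * κC ^ 3 * ‖g‖ / Real.sqrt σ) ∧
      -((1 / 2) * θ ^ 3 * κC ^ 3 * ‖g‖ / Real.sqrt σ)
        = -((1 / 2) * σ * ‖g‖ * ‖s‖ ^ 3) := by
  have hsq : 0 < Real.sqrt σ := Real.sqrt_pos.mpr hσ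
  set c : ℝ := θ * κC / Real.sqrt σ with hc
  have hcpos : 0 < c := by positivity
  have h1 : (inner ℝ g s : ℝ) = c * (inner ℝ g u : ℝ) := by
    rw [hs, real_inner_smul_right]
  have h2 : (inner ℝ s (H s) : ℝ) = c ^ 2 * (inner ℝ u (H u) : ℝ) := by
    rw [hs, map_smul, real_inner_smul_left, real_inner_smul_right]; ring
  have hns : ‖s‖ = c := by
    rw [hs, norm_smul, hu, Real.norm_eq_abs, abs_of_pos hcpos, mul_one]
  have hsq2 : Real.sqrt σ * Real.sqrt σ = σ := Real.mul_self_sqrt hσ.le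
  constructor
  · have hgnn : (0:ℝ) ≤ ‖g‖ := norm_nonneg g
    have hkey : c ^ 2 * (inner ℝ u (H u) : ℝ) ≤ -(c ^ 2 * θ * (κC * Real.sqrt σ * ‖g‖)) := by
      have h3 : (inner ℝ u (H u) : ℝ) ≤ -(θ * (κC * Real.sqrt σ * ‖g‖)) := by
        refine hcurv.trans ?_
        have := mul_le_mul_of_nonneg_left hμbig.le hθ.le
        linarith
      nlinarith [sq_nonneg c]
    have hgs : (inner ℝ g s : ℝ) ≤ 0 := by
      rw [h1]; exact mul_nonpos_of_nonneg_of_nonpos hcpos.le hgu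
    have hval : c ^ 2 * θ * (κC * Real.sqrt σ * ‖g‖)
        = θ ^ 3 * κC ^ 3 * ‖g‖ / Real.sqrt σ := by
      rw [hc]
      field_simp
    rw [h2]
    have h4 : (inner ℝ g s : ℝ) + 1 / 2 * (c ^ 2 * (inner ℝ u (H u) : ℝ))
        ≤ -(1 / 2 * (c ^ 2 * θ * (κC * Real.sqrt σ * ‖g‖))) := by linarith
    rw [hval] at h4
    exact h4.trans (le_of_eq (by ring))
  · rw [hns, hc]
    have h3 : Real.sqrt σ ^ 3 = Real.sqrt σ * σ := by
      rw [pow_succ, Real.sq_sqrt hσ.le]; ring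
    field_simp
    ring_nf
    rw [Real.sq_sqrt hσ.le]
end

section
/- Let f : ℝⁿ → ℝ be C² satisfying the local Hessian Lipschitz condition with constants L₀, L₁ ≥ 0 and radius δ > 0. Let x, g = ∇f(x), H = ∇²f(x), σ > 0, μ with 0 ≤ μ ≤ κ_C σ^{1/2}‖g‖ for some κ_C ≥ 1, and suppose s satisfies ‖s‖ ≤ min(δ, 1/σ^{1/2}) and ‖(H + (σ^{1/2}‖g‖ + μ)I)s + g‖ ≤ κ_θ‖g‖ for some κ_θ ≥ 0. Then ‖∇f(x+s)‖ ≤ ((L₀/‖g‖ + L₁)/(2σ) + 1 + κ_C + κ_θ)·‖g‖, provided g ≠ 0. -/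
open intervalIntegral in
lemma taylor_half {E : Type*} [NormedAddCommGroup E] [NormedSpace ℝ E] [CompleteSpace E]
    (G : E → E) (hG : ContDiff ℝ 1 G) (x s : E) (C : ℝ)
    (hbound : ∀ t ∈ Set.Icc (0:ℝ) 1, ‖fderiv ℝ G (x + t • s) - fderiv ℝ G x‖ * ‖s‖ ≤ C * t) :
    ‖G (x + s) - G x - fderiv ℝ G x s‖ ≤ C / 2 := by
  set v := fderiv ℝ G x s with hv
  set h : ℝ → E := fun t => G (x + t • s) - t • v with hh
  have hc : ∀ t : ℝ, HasDerivAt (fun t : ℝ => x + t • s) s t := by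
    intro t
    have := (hasDerivAt_const t x).add ((hasDerivAt_id t).smul_const s)
    simp only [zero_add, one_smul] at this
    exact this
  have hd : ∀ t : ℝ, HasDerivAt h (fderiv ℝ G (x + t • s) s - v) t := by
    intro t
    have h1 : HasFDerivAt G (fderiv ℝ G (x + t • s)) (x + t • s) :=
      (hG.differentiable one_ne_zero (x + t • s)).hasFDerivAt
    have h2 := h1.comp_hasDerivAt t (hc t)
    have h3 : HasDerivAt (fun t : ℝ => t • v) v t := by simpa using (hasDerivAt_id t).smul_const v
    exact h2.sub h3
  have hcont : Continuous fun t : ℝ => fderiv ℝ G (x + t • s) s - v := by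
    have : Continuous fun t : ℝ => fderiv ℝ G (x + t • s) :=
      (hG.continuous_fderiv one_ne_zero).comp (by continuity)
    exact (this.clm_apply continuous_const).sub continuous_const
  have hint : IntervalIntegrable (fun t : ℝ => fderiv ℝ G (x + t • s) s - v)
      MeasureTheory.volume 0 1 := hcont.intervalIntegrable 0 1
  have hftc : (∫ t in (0:ℝ)..1, (fderiv ℝ G (x + t • s) s - v))
      = h 1 - h 0 := by
    exact intervalIntegral.integral_eq_sub_of_hasDerivAt (fun t _ => hd t) hint
  have key : h 1 - h 0 = G (x + s) - G x - v := by
    simp only [hh, one_smul, zero_smul, sub_zero]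
    abel
  have hnorm : ‖∫ t in (0:ℝ)..1, (fderiv ℝ G (x + t • s) s - v)‖ ≤ C / 2 := by
    have hb : ∀ t ∈ Set.uIoc (0:ℝ) 1, ‖fderiv ℝ G (x + t • s) s - v‖ ≤ C * t := by
      intro t ht
      rw [Set.uIoc_of_le (by norm_num)] at ht
      have ht' : t ∈ Set.Icc (0:ℝ) 1 := ⟨le_of_lt ht.1, ht.2⟩
      calc ‖fderiv ℝ G (x + t • s) s - v‖
          = ‖(fderiv ℝ G (x + t • s) - fderiv ℝ G x) s‖ := by
            simp [hv, ContinuousLinearMap.sub_apply]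
        _ ≤ ‖fderiv ℝ G (x + t • s) - fderiv ℝ G x‖ * ‖s‖ :=
            (fderiv ℝ G (x + t • s) - fderiv ℝ G x).le_opNorm s
        _ ≤ C * t := hbound t ht'
    have hgint : IntervalIntegrable (fun t : ℝ => C * t) MeasureTheory.volume 0 1 :=
      (continuous_const.mul continuous_id).intervalIntegrable 0 1
    have hae : ∀ᵐ t ∂(MeasureTheory.volume.restrict (Set.uIoc (0:ℝ) 1)),
        ‖fderiv ℝ G (x + t • s) s - v‖ ≤ C * t := by
      filter_upwards [MeasureTheory.ae_restrict_mem measurableSet_uIoc] with t ht using hb t ht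
    have := intervalIntegral.norm_integral_le_abs_of_norm_le (g := fun t => C * t) hae hgint
    have hC : 0 ≤ C := by
      have h1 := hbound 1 ⟨zero_le_one, le_rfl⟩
      have : (0:ℝ) ≤ ‖fderiv ℝ G (x + (1:ℝ) • s) - fderiv ℝ G x‖ * ‖s‖ := by positivity
      linarith
    calc ‖∫ t in (0:ℝ)..1, (fderiv ℝ G (x + t • s) s - v)‖
        ≤ |∫ t in (0:ℝ)..1, C * t| := this
      _ = C / 2 := by
          rw [intervalIntegral.integral_const_mul]
          rw [integral_id]
          rw [abs_of_nonneg (by positivity)]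
          ring
  rw [hftc, key] at hnorm
  exact hnorm

set_option maxHeartbeats 1000000 in
/-- Bound on the gradient norm at the trial point after an inexact regularized
Newton step, under the local Hessian Lipschitz condition. -/
theorem stmt_6 {n : ℕ} (f : EuclideanSpace ℝ (Fin n) → ℝ)
    (hf : ContDiff ℝ 2 f) (L₀ L₁ δ : ℝ) (hL₀ : 0 ≤ L₀) (hL₁ : 0 ≤ L₁) (hδ : 0 < δ)
    (hLip : ∀ x y : EuclideanSpace ℝ (Fin n), ‖x - y‖ ≤ δ →
      ‖fderiv ℝ (gradient f) y - fderiv ℝ (gradient f) x‖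
        ≤ (L₀ + L₁ * ‖gradient f x‖) * ‖x - y‖)
    (x s : EuclideanSpace ℝ (Fin n)) (σ μ κC κθ : ℝ)
    (hσ : 0 < σ) (hκC : 1 ≤ κC) (hκθ : 0 ≤ κθ)
    (hμ0 : 0 ≤ μ) (hμ : μ ≤ κC * Real.sqrt σ * ‖gradient f x‖)
    (hsδ : ‖s‖ ≤ min δ (1 / Real.sqrt σ))
    (hres : ‖fderiv ℝ (gradient f) x s
        + (Real.sqrt σ * ‖gradient f x‖ + μ) • s + gradient f x‖
        ≤ κθ * ‖gradient f x‖)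
    (hg : gradient f x ≠ 0) :
    ‖gradient f (x + s)‖
      ≤ ((L₀ / ‖gradient f x‖ + L₁) / (2 * σ) + 1 + κC + κθ) * ‖gradient f x‖ := by
  have hsqσ : 0 < Real.sqrt σ := Real.sqrt_pos.mpr hσ
  have hsq : Real.sqrt σ * Real.sqrt σ = σ := Real.mul_self_sqrt hσ.le
  set g := gradient f x with hgdef
  have hgn : 0 < ‖g‖ := norm_pos_iff.mpr hg
  set K := L₀ + L₁ * ‖g‖ with hK
  have hK0 : 0 ≤ K := by positivity
  have hs1 : ‖s‖ ≤ δ := hsδ.trans (min_le_left _ _)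
  have hs2 : ‖s‖ ≤ 1 / Real.sqrt σ := hsδ.trans (min_le_right _ _)
  -- C¹ smoothness of the gradient
  have hG1 : ContDiff ℝ 1 (gradient f) := by
    have h1 : ContDiff ℝ 1 (fderiv ℝ f) := hf.fderiv_right (by norm_num)
    have h2 : ContDiff ℝ 1 fun y =>
        (InnerProductSpace.toDual ℝ (EuclideanSpace ℝ (Fin n))).symm (fderiv ℝ f y) :=
      ((InnerProductSpace.toDual ℝ (EuclideanSpace ℝ (Fin n))).symm.contDiff).comp h1
    exact h2
  -- Taylor bound
  have hT : ‖gradient f (x + s) - g - fderiv ℝ (gradient f) x s‖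
      ≤ K * (‖s‖ * ‖s‖) / 2 := by
    apply taylor_half (gradient f) hG1 x s
    intro t ht
    have hnorm : ‖x - (x + t • s)‖ = t * ‖s‖ := by
      rw [show x - (x + t • s) = -(t • s) by abel, norm_neg, norm_smul,
        Real.norm_eq_abs, abs_of_nonneg ht.1]
    have hle : ‖x - (x + t • s)‖ ≤ δ := by
      rw [hnorm]
      calc t * ‖s‖ ≤ 1 * ‖s‖ := by
            apply mul_le_mul_of_nonneg_right ht.2 (norm_nonneg s)
        _ ≤ δ := by simpa using hs1
    have := hLip x (x + t • s) hle
    rw [hnorm] at this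
    calc ‖fderiv ℝ (gradient f) (x + t • s) - fderiv ℝ (gradient f) x‖ * ‖s‖
        ≤ (K * (t * ‖s‖)) * ‖s‖ :=
          mul_le_mul_of_nonneg_right this (norm_nonneg s)
      _ = K * (‖s‖ * ‖s‖) * t := by ring
  -- decomposition and triangle inequality
  set c := Real.sqrt σ * ‖g‖ + μ with hc
  have hc0 : 0 ≤ c := by positivity
  have hdecomp : gradient f (x + s)
      = (gradient f (x + s) - g - fderiv ℝ (gradient f) x s)
        + (fderiv ℝ (gradient f) x s + c • s + g) + (-(c • s)) := by abel
  have htri : ‖gradient f (x + s)‖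
      ≤ K * (‖s‖ * ‖s‖) / 2 + κθ * ‖g‖ + c * ‖s‖ := by
    calc ‖gradient f (x + s)‖
        ≤ ‖gradient f (x + s) - g - fderiv ℝ (gradient f) x s‖
          + ‖fderiv ℝ (gradient f) x s + c • s + g‖ + ‖-(c • s)‖ := by
          conv_lhs => rw [hdecomp]
          exact norm_add₃_le
      _ ≤ K * (‖s‖ * ‖s‖) / 2 + κθ * ‖g‖ + c * ‖s‖ := by
          have h3 : ‖-(c • s)‖ = c * ‖s‖ := by
            rw [norm_neg, norm_smul, Real.norm_eq_abs, abs_of_nonneg hc0]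
          rw [h3]
          exact add_le_add (add_le_add hT hres) le_rfl
  -- arithmetic
  have hss : ‖s‖ * ‖s‖ ≤ 1 / σ := by
    calc ‖s‖ * ‖s‖ ≤ (1 / Real.sqrt σ) * (1 / Real.sqrt σ) :=
          mul_le_mul hs2 hs2 (norm_nonneg s) (by positivity)
      _ = 1 / σ := by rw [div_mul_div_comm, one_mul, hsq]
  have ha : K * (‖s‖ * ‖s‖) / 2 ≤ K / (2 * σ) := by
    have := mul_le_mul_of_nonneg_left hss hK0
    rw [show K / (2 * σ) = K * (1/σ) / 2 by ring]
    linarith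
  have hb : c * ‖s‖ ≤ (1 + κC) * ‖g‖ := by
    have h1 : c ≤ (1 + κC) * Real.sqrt σ * ‖g‖ := by
      rw [hc]; nlinarith
    calc c * ‖s‖ ≤ ((1 + κC) * Real.sqrt σ * ‖g‖) * (1 / Real.sqrt σ) :=
          mul_le_mul h1 hs2 (norm_nonneg s) (by positivity)
      _ = (1 + κC) * ‖g‖ := by field_simp
  have hR : ((L₀ / ‖g‖ + L₁) / (2 * σ) + 1 + κC + κθ) * ‖g‖
      = K / (2 * σ) + (1 + κC + κθ) * ‖g‖ := by
    rw [hK]; field_simp; ring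
  rw [hR]
  nlinarith [ha, hb, htri, hgn.le, hκθ, hκC]
end

section
/- Let f : ℝⁿ → ℝ be C² satisfying the local Hessian Lipschitz condition with constants L₀, L₁ ≥ 0 and radius δ. Let x with g = ∇f(x) ≠ 0, H = ∇²f(x), and suppose s satisfies ‖s‖ ≤ δ, ‖∇f(x+s)‖ > ‖g‖/2, and ‖(H + (σ^{1/2}‖g‖ + μ)I)s + g‖ ≤ κ_θ σ^{1/2}‖g‖‖s‖ with 0 ≤ μ ≤ κ_C σ^{1/2}‖g‖, σ > 0, κ_C ≥ 1, κ_θ ≥ 0. Then ‖s‖ ≥ 1/(σ^{1/2}[(1+κ_θ+κ_C) + √((1+κ_θ+κ_C)² + (L₀/‖g‖ + L₁)/σ)]). -/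
section auxiliary

lemma rem_bound' {E F : Type*} [NormedAddCommGroup E] [NormedSpace ℝ E]
    [NormedAddCommGroup F] [NormedSpace ℝ F] [CompleteSpace F]
    (G : E → F) (hG : ContDiff ℝ 1 G) (x s : E) (L : ℝ)
    (hlip : ∀ t ∈ Set.Icc (0:ℝ) 1,
      ‖fderiv ℝ G (x + t • s) - fderiv ℝ G x‖ ≤ L * (t * ‖s‖)) :
    ‖G (x + s) - G x - fderiv ℝ G x s‖ ≤ L / 2 * ‖s‖ ^ 2 := by
  set ψ : ℝ → F := fun t => G (x + t • s) - t • (fderiv ℝ G x s) with hψ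
  have hline : ∀ t : ℝ, HasDerivAt (fun t : ℝ => x + t • s) s t := fun t => by
    simpa using ((hasDerivAt_id t).smul_const s).const_add x
  have hψ' : ∀ t : ℝ, HasDerivAt ψ (fderiv ℝ G (x + t • s) s - fderiv ℝ G x s) t := by
    intro t
    have h1 : HasDerivAt (fun t : ℝ => G (x + t • s)) (fderiv ℝ G (x + t • s) s) t :=
      ((hG.differentiable one_ne_zero (x + t • s)).hasFDerivAt).comp_hasDerivAt t (hline t)
    have h2 : HasDerivAt (fun t : ℝ => t • (fderiv ℝ G x s)) (fderiv ℝ G x s) t := by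
      simpa using (hasDerivAt_id t).smul_const (fderiv ℝ G x s)
    exact h1.sub h2
  have hcont : Continuous fun t : ℝ => fderiv ℝ G (x + t • s) s - fderiv ℝ G x s := by
    have : Continuous fun t : ℝ => fderiv ℝ G (x + t • s) :=
      (hG.continuous_fderiv one_ne_zero).comp (by continuity)
    exact (this.clm_apply continuous_const).sub continuous_const
  have hint : (∫ t in (0:ℝ)..1, (fderiv ℝ G (x + t • s) s - fderiv ℝ G x s))
      = ψ 1 - ψ 0 :=
    intervalIntegral.integral_eq_sub_of_hasDerivAt (fun t _ => hψ' t)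
      (hcont.intervalIntegrable 0 1)
  have hval : ψ 1 - ψ 0 = G (x + s) - G x - fderiv ℝ G x s := by
    simp [hψ]; abel
  rw [← hval, ← hint]
  calc ‖∫ t in (0:ℝ)..1, (fderiv ℝ G (x + t • s) s - fderiv ℝ G x s)‖
      ≤ ∫ t in (0:ℝ)..1, ‖fderiv ℝ G (x + t • s) s - fderiv ℝ G x s‖ :=
        intervalIntegral.norm_integral_le_integral_norm (by norm_num)
    _ ≤ ∫ t in (0:ℝ)..1, L * ‖s‖ ^ 2 * t := by
        apply intervalIntegral.integral_mono_on (by norm_num)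
          (hcont.norm.intervalIntegrable 0 1)
          ((continuous_const.mul continuous_id).intervalIntegrable 0 1)
        intro t ht
        have := hlip t ht
        calc ‖fderiv ℝ G (x + t • s) s - fderiv ℝ G x s‖
            = ‖(fderiv ℝ G (x + t • s) - fderiv ℝ G x) s‖ := by simp
          _ ≤ ‖fderiv ℝ G (x + t • s) - fderiv ℝ G x‖ * ‖s‖ :=
              (fderiv ℝ G (x + t • s) - fderiv ℝ G x).le_opNorm s
          _ ≤ L * (t * ‖s‖) * ‖s‖ := mul_le_mul_of_nonneg_right this (norm_nonneg s)
          _ = L * ‖s‖ ^ 2 * t := by ring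
    _ = L / 2 * ‖s‖ ^ 2 := by
        rw [intervalIntegral.integral_const_mul, integral_id]
        ring

lemma arith_final' (σ g a B L c t : ℝ) (hσ : 0 < σ) (hgn : 0 < g) (ha : 0 < a)
    (ha2 : a ^ 2 = σ) (hB : 0 < B) (htn : 0 ≤ t) (hc : 0 ≤ c)
    (hcg : c * g = L)
    (key : g / 2 < L / 2 * t ^ 2 + B * a * g * t) :
    t ≥ 1 / (a * (B + Real.sqrt (B ^ 2 + c / σ))) := by
  set W : ℝ := Real.sqrt (B ^ 2 + c / σ) with hWdef
  have hWn : 0 ≤ W := Real.sqrt_nonneg _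
  have hW2 : W ^ 2 = B ^ 2 + c / σ := Real.sq_sqrt (by positivity)
  have hσc : σ * (c / σ) = c := mul_div_cancel₀ c (ne_of_gt hσ)
  have hW2' : g * a ^ 2 * W ^ 2 = g * a ^ 2 * B ^ 2 + L := by
    rw [hW2, ha2]; linear_combination g * hσc + hcg
  have hD : 0 < a * (B + W) := by positivity
  rw [ge_iff_le, div_le_iff₀ hD]
  have ht : 0 < t := by
    rcases htn.lt_or_eq with h | h
    · exact h
    · exfalso; rw [← h] at key; norm_num at key; linarith
  have hW2t : g * (a * W * t) ^ 2 = g * (a * B * t) ^ 2 + L * t ^ 2 := by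
    nlinarith [hW2', sq_nonneg t]
  have hP : 0 ≤ a * W * t := by positivity
  rcases le_or_gt (a * B * t) 1 with hc1 | hc1
  · have hsq : (1 - a * B * t) ^ 2 < (a * W * t) ^ 2 := by nlinarith [key, hW2t]
    have := lt_of_pow_lt_pow_left₀ 2 hP hsq
    nlinarith [this]
  · nlinarith [hP]

end auxiliary

/-- Lower bound on the length of a Newton trial step whose gradient did not
decrease by a factor of two. -/
theorem stmt_7 {n : ℕ} (f : EuclideanSpace ℝ (Fin n) → ℝ)
    (hf : ContDiff ℝ 2 f) (L₀ L₁ δ : ℝ) (hL₀ : 0 ≤ L₀) (hL₁ : 0 ≤ L₁) (hδ : 0 < δ)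
    (hLip : ∀ x y : EuclideanSpace ℝ (Fin n), ‖x - y‖ ≤ δ →
      ‖fderiv ℝ (gradient f) y - fderiv ℝ (gradient f) x‖
        ≤ (L₀ + L₁ * ‖gradient f x‖) * ‖x - y‖)
    (x s : EuclideanSpace ℝ (Fin n)) (σ μ κC κθ : ℝ)
    (hσ : 0 < σ) (hκC : 1 ≤ κC) (hκθ : 0 ≤ κθ)
    (hμ0 : 0 ≤ μ) (hμ : μ ≤ κC * Real.sqrt σ * ‖gradient f x‖)
    (hg : gradient f x ≠ 0)
    (hsδ : ‖s‖ ≤ δ)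
    (hbig : ‖gradient f (x + s)‖ > ‖gradient f x‖ / 2)
    (hres : ‖fderiv ℝ (gradient f) x s
        + (Real.sqrt σ * ‖gradient f x‖ + μ) • s + gradient f x‖
        ≤ κθ * Real.sqrt σ * ‖gradient f x‖ * ‖s‖) :
    ‖s‖ ≥ 1 / (Real.sqrt σ * ((1 + κθ + κC)
        + Real.sqrt ((1 + κθ + κC) ^ 2 + (L₀ / ‖gradient f x‖ + L₁) / σ))) := by
  set G := gradient f with hGdef
  set g : ℝ := ‖gradient f x‖ with hgdef
  have hgn : 0 < g := norm_pos_iff.mpr hg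
  set a : ℝ := Real.sqrt σ with hadef
  have ha : 0 < a := Real.sqrt_pos.mpr hσ
  have ha2 : a ^ 2 = σ := Real.sq_sqrt hσ.le
  set B : ℝ := 1 + κθ + κC with hBdef
  have hB : 0 < B := by positivity
  set L : ℝ := L₀ + L₁ * g with hLdef
  set t : ℝ := ‖s‖ with htdef
  have htn : 0 ≤ t := norm_nonneg s
  -- C¹ smoothness of the gradient
  have hG1 : ContDiff ℝ 1 G := by
    have : G = fun y => (InnerProductSpace.toDual ℝ _).symm (fderiv ℝ f y) := rfl
    rw [this]
    exact (InnerProductSpace.toDual ℝ _).symm.contDiff.comp (hf.fderiv_right (by norm_num))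
  -- Taylor remainder
  have hrem : ‖G (x + s) - G x - fderiv ℝ G x s‖ ≤ L / 2 * t ^ 2 := by
    apply rem_bound' G hG1 x s L
    intro u hu
    have h1 : ‖x - (x + u • s)‖ = u * t := by
      rw [show x - (x + u • s) = -(u • s) by abel, norm_neg, norm_smul,
        Real.norm_eq_abs, abs_of_nonneg hu.1]
    have h2 : ‖x - (x + u • s)‖ ≤ δ := by
      rw [h1]
      calc u * t ≤ 1 * t := mul_le_mul_of_nonneg_right hu.2 htn
        _ ≤ δ := by rw [one_mul]; exact hsδ
    have := hLip x (x + u • s) h2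
    rw [h1] at this
    exact this
  -- Key quadratic inequality
  have key : g / 2 < L / 2 * t ^ 2 + B * a * g * t := by
    set lam : ℝ := a * g + μ with hlam
    have hlamn : 0 ≤ lam := by positivity
    have hdecomp : G (x + s) = (G (x + s) - G x - fderiv ℝ G x s)
        + (fderiv ℝ G x s + lam • s + G x) - lam • s := by abel
    have h4 : ‖lam • s‖ = lam * t := by
      rw [norm_smul, Real.norm_eq_abs, abs_of_nonneg hlamn]
    have hlam2 : lam ≤ (1 + κC) * a * g := by
      rw [hlam]; nlinarith [hμ]
    calc g / 2 < ‖G (x + s)‖ := hbig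
      _ = ‖(G (x + s) - G x - fderiv ℝ G x s)
            + (fderiv ℝ G x s + lam • s + G x) - lam • s‖ := by rw [← hdecomp]
      _ ≤ ‖G (x + s) - G x - fderiv ℝ G x s‖
            + ‖fderiv ℝ G x s + lam • s + G x‖ + ‖lam • s‖ :=
          norm_sub_le_of_le (norm_add_le _ _) le_rfl
      _ ≤ L / 2 * t ^ 2 + κθ * a * g * t + lam * t :=
          add_le_add (add_le_add hrem hres) h4.le
      _ ≤ L / 2 * t ^ 2 + κθ * a * g * t + (1 + κC) * a * g * t :=
          add_le_add_right (mul_le_mul_of_nonneg_right hlam2 htn) _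
      _ = L / 2 * t ^ 2 + B * a * g * t := by rw [hBdef]; ring
  -- Final algebra
  have hcg : (L₀ / g + L₁) * g = L := by
    rw [hLdef, add_mul, div_mul_cancel₀ _ (ne_of_gt hgn)]
  exact arith_final' σ g a B L (L₀ / g + L₁) t hσ hgn ha ha2 hB htn
    (by positivity) hcg key
end

section
/- Let (σ_k) be a sequence of positive reals with σ_0 > 0, let 0 < γ₁ < 1 < γ₂, and let S ⊆ {0,…,k−1} be the set of 'successful' indices. Suppose σ_{i+1} ≥ γ₁σ_i for i ∈ S and σ_{i+1} ≥ γ₂σ_i for i ∉ S, and suppose σ_i ≤ σ_max for all i ≤ k. Then k ≤ |S|·(1 + |log γ₁|/log γ₂) + (1/log γ₂)·log(σ_max/σ_0). -/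
lemma stmt_9_aux (σ : ℕ → ℝ) (k : ℕ) (γ₁ γ₂ : ℝ) (S : Finset ℕ)
    (hσpos : ∀ i, 0 < σ i)
    (hγ₁ : 0 < γ₁) (hγ₂ : 1 < γ₂)
    (hsucc : ∀ i ∈ Finset.range k, i ∈ S → γ₁ * σ i ≤ σ (i + 1))
    (hfail : ∀ i ∈ Finset.range k, i ∉ S → γ₂ * σ i ≤ σ (i + 1)) :
    ∀ n ≤ k,
      σ 0 * γ₁ ^ (S ∩ Finset.range n).card
        * γ₂ ^ (n - (S ∩ Finset.range n).card) ≤ σ n := by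
  intro n hn
  induction n with
  | zero => simp
  | succ m ih =>
    have hm : m ≤ k := Nat.le_of_succ_le hn
    have hmk : m ∈ Finset.range k := Finset.mem_range.mpr (Nat.lt_of_succ_le hn)
    have ihm := ih hm
    have hc : (S ∩ Finset.range m).card ≤ m := by
      calc (S ∩ Finset.range m).card ≤ (Finset.range m).card :=
            Finset.card_le_card (Finset.inter_subset_right)
        _ = m := Finset.card_range m
    have hγ₂0 : (0:ℝ) < γ₂ := lt_trans one_pos hγ₂
    by_cases hmS : m ∈ S
    · have hset : S ∩ Finset.range (m+1) = insert m (S ∩ Finset.range m) := by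
        ext x
        simp only [Finset.mem_inter, Finset.mem_range, Finset.mem_insert, Nat.lt_succ_iff]
        constructor
        · rintro ⟨hx, hx2⟩
          rcases Nat.lt_or_ge x m with h | h
          · exact Or.inr ⟨hx, h⟩
          · exact Or.inl (le_antisymm hx2 h)
        · rintro (rfl | ⟨hx, hx2⟩)
          · exact ⟨hmS, le_rfl⟩
          · exact ⟨hx, le_of_lt hx2⟩
      have hnotmem : m ∉ S ∩ Finset.range m := by simp
      have hcard : (S ∩ Finset.range (m+1)).card = (S ∩ Finset.range m).card + 1 := by
        rw [hset, Finset.card_insert_of_notMem hnotmem]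
      rw [hcard]
      have hexp : m + 1 - ((S ∩ Finset.range m).card + 1) = m - (S ∩ Finset.range m).card := by
        omega
      rw [hexp, pow_succ]
      have h1 : γ₁ * σ m ≤ σ (m+1) := hsucc m hmk hmS
      calc σ 0 * (γ₁ ^ (S ∩ Finset.range m).card * γ₁)
            * γ₂ ^ (m - (S ∩ Finset.range m).card)
          = γ₁ * (σ 0 * γ₁ ^ (S ∩ Finset.range m).card
            * γ₂ ^ (m - (S ∩ Finset.range m).card)) := by ring
        _ ≤ γ₁ * σ m := by
            exact mul_le_mul_of_nonneg_left ihm (le_of_lt hγ₁)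
        _ ≤ σ (m+1) := h1
    · have hset : S ∩ Finset.range (m+1) = S ∩ Finset.range m := by
        ext x
        simp only [Finset.mem_inter, Finset.mem_range, Nat.lt_succ_iff]
        constructor
        · rintro ⟨hx, hx2⟩
          rcases Nat.lt_or_ge x m with h | h
          · exact ⟨hx, h⟩
          · exact absurd (le_antisymm hx2 h ▸ hx) hmS
        · rintro ⟨hx, hx2⟩
          exact ⟨hx, le_of_lt hx2⟩
      rw [hset]
      have hexp : m + 1 - (S ∩ Finset.range m).card
          = (m - (S ∩ Finset.range m).card) + 1 := by omega
      rw [hexp, pow_succ]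
      have h1 : γ₂ * σ m ≤ σ (m+1) := hfail m hmk hmS
      calc σ 0 * γ₁ ^ (S ∩ Finset.range m).card
            * (γ₂ ^ (m - (S ∩ Finset.range m).card) * γ₂)
          = γ₂ * (σ 0 * γ₁ ^ (S ∩ Finset.range m).card
            * γ₂ ^ (m - (S ∩ Finset.range m).card)) := by ring
        _ ≤ γ₂ * σ m := mul_le_mul_of_nonneg_left ihm (le_of_lt hγ₂0)
        _ ≤ σ (m+1) := h1

/-- Bound on the total number of iterations of an adaptive regularization method
in terms of the number of successful ones. -/
theorem stmt_9 (σ : ℕ → ℝ) (k : ℕ) (γ₁ γ₂ σmax : ℝ) (S : Finset ℕ)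
    (hσpos : ∀ i, 0 < σ i)
    (hγ₁ : 0 < γ₁) (hγ₁1 : γ₁ < 1) (hγ₂ : 1 < γ₂)
    (hS : S ⊆ Finset.range k)
    (hsucc : ∀ i ∈ Finset.range k, i ∈ S → γ₁ * σ i ≤ σ (i + 1))
    (hfail : ∀ i ∈ Finset.range k, i ∉ S → γ₂ * σ i ≤ σ (i + 1))
    (hmax : ∀ i ≤ k, σ i ≤ σmax) :
    (k : ℝ) ≤ S.card * (1 + |Real.log γ₁| / Real.log γ₂)
      + (1 / Real.log γ₂) * Real.log (σmax / σ 0) := by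
  have hγ₂0 : (0:ℝ) < γ₂ := lt_trans one_pos hγ₂
  have hL : 0 < Real.log γ₂ := Real.log_pos hγ₂
  have hl1 : Real.log γ₁ < 0 := Real.log_neg hγ₁ hγ₁1
  have habs : |Real.log γ₁| = -Real.log γ₁ := abs_of_neg hl1
  have hinter : S ∩ Finset.range k = S := Finset.inter_eq_left.mpr hS
  have key := stmt_9_aux σ k γ₁ γ₂ S hσpos hγ₁ hγ₂ hsucc hfail k le_rfl
  rw [hinter] at key
  set s := S.card with hs
  have hsk : s ≤ k := by
    calc s ≤ (Finset.range k).card := Finset.card_le_card hS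
      _ = k := Finset.card_range k
  have hσ0 : 0 < σ 0 := hσpos 0
  have hσk : σ k ≤ σmax := hmax k le_rfl
  have hσmax : 0 < σmax := lt_of_lt_of_le (hσpos k) hσk
  have hlhs_pos : 0 < σ 0 * γ₁ ^ s * γ₂ ^ (k - s) :=
    mul_pos (mul_pos hσ0 (pow_pos hγ₁ s)) (pow_pos hγ₂0 _)
  have hloge : Real.log (σ 0 * γ₁ ^ s * γ₂ ^ (k - s)) ≤ Real.log σmax :=
    Real.log_le_log hlhs_pos (le_trans key hσk)
  rw [Real.log_mul (by positivity) (by positivity),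
      Real.log_mul (by positivity) (by positivity),
      Real.log_pow, Real.log_pow] at hloge
  have hcast : ((k - s : ℕ) : ℝ) = (k : ℝ) - (s : ℝ) := by
    push_cast [Nat.cast_sub hsk]; ring
  rw [hcast] at hloge
  have hldiv : Real.log (σmax / σ 0) = Real.log σmax - Real.log (σ 0) :=
    Real.log_div (ne_of_gt hσmax) (ne_of_gt hσ0)
  rw [hldiv, habs]
  have hfinal : (k : ℝ) * Real.log γ₂ ≤
      (s * (1 + -Real.log γ₁ / Real.log γ₂)
        + 1 / Real.log γ₂ * (Real.log σmax - Real.log (σ 0))) * Real.log γ₂ := by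
    have hne : Real.log γ₂ ≠ 0 := ne_of_gt hL
    field_simp
    nlinarith [hloge]
  exact le_of_mul_le_mul_right hfinal hL
end

section
/- Let (g_i)_{i=0}^{k} be a sequence of nonzero vectors in ℝⁿ, ε ∈ (0,1], and suppose the index set {0,…,k−1} is partitioned into three sets A, B, C such that ‖g_{i+1}‖ ≤ (K_A/ε)‖g_i‖ for i ∈ A, ‖g_{i+1}‖ ≤ ‖g_i‖/2 for i ∈ B, and ‖g_{i+1}‖ ≤ (K_C/ε)‖g_i‖ for i ∈ C, where K_A, K_C ≥ 1. If ‖g_k‖ ≥ ε, then |B| ≤ (|A|/log 2)·log(K_A/ε) + (|C|/log 2)·log(K_C/ε) + (|log ε| + log‖g_0‖)/log 2. -/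
/-- Bound on the number of gradient-halving steps in terms of the other step
types, for a sequence of nonzero gradients with controlled growth. -/
theorem stmt_10 {n : ℕ} (g : ℕ → EuclideanSpace ℝ (Fin n)) (k : ℕ)
    (ε KA KC : ℝ) (A B C : Finset ℕ)
    (hε : 0 < ε) (hε1 : ε ≤ 1) (hKA : 1 ≤ KA) (hKC : 1 ≤ KC)
    (hg : ∀ i ≤ k, g i ≠ 0)
    (hAB : Disjoint A B) (hAC : Disjoint A C) (hBC : Disjoint B C)
    (hpart : A ∪ B ∪ C = Finset.range k)
    (hA : ∀ i ∈ A, ‖g (i + 1)‖ ≤ (KA / ε) * ‖g i‖)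
    (hB : ∀ i ∈ B, ‖g (i + 1)‖ ≤ ‖g i‖ / 2)
    (hC : ∀ i ∈ C, ‖g (i + 1)‖ ≤ (KC / ε) * ‖g i‖)
    (hterm : ε ≤ ‖g k‖) :
    (B.card : ℝ) ≤ (A.card / Real.log 2) * Real.log (KA / ε)
      + (C.card / Real.log 2) * Real.log (KC / ε)
      + (|Real.log ε| + Real.log ‖g 0‖) / Real.log 2 := by
  have hlog2 : (0:ℝ) < Real.log 2 := Real.log_pos (by norm_num)
  have hpos : ∀ i ≤ k, (0:ℝ) < ‖g i‖ := fun i hi => norm_pos_iff.mpr (hg i hi)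
  have hmem : ∀ i, i ∈ A ∪ B ∪ C → i < k := fun i hi => by
    rw [hpart] at hi; exact Finset.mem_range.mp hi
  have hmA : ∀ i ∈ A, i < k := fun i hi =>
    hmem i (Finset.mem_union_left _ (Finset.mem_union_left _ hi))
  have hmB : ∀ i ∈ B, i < k := fun i hi =>
    hmem i (Finset.mem_union_left _ (Finset.mem_union_right _ hi))
  have hmC : ∀ i ∈ C, i < k := fun i hi => hmem i (Finset.mem_union_right _ hi)
  set L : ℕ → ℝ := fun i => Real.log ‖g i‖ with hL
  have hKAε : (0:ℝ) < KA / ε := div_pos (lt_of_lt_of_le one_pos hKA) hε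
  have hKCε : (0:ℝ) < KC / ε := div_pos (lt_of_lt_of_le one_pos hKC) hε
  have hstep : ∀ (i : ℕ) (K : ℝ), i < k → 0 < K → ‖g (i+1)‖ ≤ K * ‖g i‖ →
      L (i+1) - L i ≤ Real.log K := by
    intro i K hik hK hle
    have h1 : 0 < ‖g i‖ := hpos i hik.le
    have h2 : 0 < ‖g (i+1)‖ := hpos (i+1) hik
    have : L (i+1) ≤ Real.log (K * ‖g i‖) := Real.log_le_log h2 hle
    rw [Real.log_mul hK.ne' h1.ne'] at this
    simpa [hL] using by linarith
  have hAb : ∑ i ∈ A, (L (i+1) - L i) ≤ (A.card : ℝ) * Real.log (KA / ε) := by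
    calc ∑ i ∈ A, (L (i+1) - L i) ≤ ∑ i ∈ A, Real.log (KA / ε) :=
          Finset.sum_le_sum fun i hi => hstep i _ (hmA i hi) hKAε (hA i hi)
      _ = (A.card : ℝ) * Real.log (KA / ε) := by
          rw [Finset.sum_const, nsmul_eq_mul]
  have hCb : ∑ i ∈ C, (L (i+1) - L i) ≤ (C.card : ℝ) * Real.log (KC / ε) := by
    calc ∑ i ∈ C, (L (i+1) - L i) ≤ ∑ i ∈ C, Real.log (KC / ε) :=
          Finset.sum_le_sum fun i hi => hstep i _ (hmC i hi) hKCε (hC i hi)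
      _ = (C.card : ℝ) * Real.log (KC / ε) := by
          rw [Finset.sum_const, nsmul_eq_mul]
  have hBb : ∑ i ∈ B, (L (i+1) - L i) ≤ (B.card : ℝ) * (-Real.log 2) := by
    calc ∑ i ∈ B, (L (i+1) - L i) ≤ ∑ i ∈ B, (-Real.log 2) := by
          refine Finset.sum_le_sum fun i hi => ?_
          have := hstep i (1/2) (hmB i hi) (by norm_num)
            (by simpa [div_eq_mul_inv, mul_comm] using hB i hi)
          simpa [Real.log_div, Real.log_one] using this
      _ = (B.card : ℝ) * (-Real.log 2) := by
          rw [Finset.sum_const, nsmul_eq_mul]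
  have htel : ∑ i ∈ Finset.range k, (L (i+1) - L i) = L k - L 0 :=
    Finset.sum_range_sub L k
  have hsplit : ∑ i ∈ Finset.range k, (L (i+1) - L i)
      = ∑ i ∈ A, (L (i+1) - L i) + ∑ i ∈ B, (L (i+1) - L i)
        + ∑ i ∈ C, (L (i+1) - L i) := by
    rw [← hpart, Finset.sum_union (Finset.disjoint_union_left.mpr ⟨hAC, hBC⟩), Finset.sum_union hAB]
  have hεlog : Real.log ε ≤ L k := Real.log_le_log hε hterm
  have habs : -Real.log ε ≤ |Real.log ε| := neg_le_abs _
  have key : (B.card : ℝ) * Real.log 2 ≤ (A.card : ℝ) * Real.log (KA / ε)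
      + (C.card : ℝ) * Real.log (KC / ε) + (|Real.log ε| + L 0) := by
    nlinarith [hAb, hBb, hCb, htel, hsplit, hεlog, habs]
  have hrhs : (A.card / Real.log 2) * Real.log (KA / ε)
      + (C.card / Real.log 2) * Real.log (KC / ε)
      + (|Real.log ε| + Real.log ‖g 0‖) / Real.log 2
      = ((A.card : ℝ) * Real.log (KA / ε) + (C.card : ℝ) * Real.log (KC / ε)
        + (|Real.log ε| + L 0)) / Real.log 2 := by
    field_simp
    rfl

  rw [hrhs, le_div_iff₀ hlog2]
  exact key
end

section
/- Let f : ℝⁿ → ℝ be C² satisfying ‖∇²f(y) − ∇²f(x)‖ ≤ (L₀ + L₁‖∇f(x)‖)‖x−y‖ for ‖x−y‖ ≤ δ. Let x with ‖∇f(x)‖ ≤ 1, H = ∇²f(x), σ ≥ σ_min > 0, and let u be a unit eigenvector of H for λ = λ_min(H) with ∇f(x)ᵀu ≤ 0. Set s = u/σ^{1/2} and suppose ‖s‖ ≤ δ. Then ‖∇f(x+s)‖ ≤ (L₀+L₁)/(2√(σ·σ_min)) + 1 + |λ|/σ^{1/2}. -/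
lemma aux_taylor {E : Type*} [NormedAddCommGroup E] [NormedSpace ℝ E] [CompleteSpace E]
    (G : E → E) (hG : ContDiff ℝ 1 G) (x s : E) (L : ℝ)
    (hL : ∀ t ∈ Set.Icc (0:ℝ) 1,
      ‖fderiv ℝ G (x + t • s) - fderiv ℝ G x‖ ≤ L * (t * ‖s‖)) :
    ‖G (x + s) - G x - fderiv ℝ G x s‖ ≤ L * ‖s‖ ^ 2 / 2 := by
  set g' : ℝ → E := fun t => fderiv ℝ G (x + t • s) s - fderiv ℝ G x s with hg'
  have hpath : ∀ t : ℝ, HasDerivAt (fun t : ℝ => x + t • s) s t := fun t => by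
    simpa using ((hasDerivAt_id t).smul_const s).const_add x
  have hgd : ∀ t ∈ Set.uIcc (0:ℝ) 1,
      HasDerivAt (fun t : ℝ => G (x + t • s) - t • (fderiv ℝ G x s)) (g' t) t := by
    intro t _
    have h2 : HasDerivAt (fun t : ℝ => t • (fderiv ℝ G x s)) (fderiv ℝ G x s) t := by
      simpa using (hasDerivAt_id t).smul_const (fderiv ℝ G x s)
    exact ((hG.differentiable one_ne_zero (x + t • s)).hasFDerivAt.comp_hasDerivAt t
      (hpath t)).sub h2
  have hcont : Continuous g' := by
    have h1 : Continuous fun t : ℝ => fderiv ℝ G (x + t • s) :=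
      (hG.continuous_fderiv one_ne_zero).comp (by continuity)
    exact ((ContinuousLinearMap.apply ℝ E s).continuous.comp h1).sub continuous_const
  have hint : IntervalIntegrable g' MeasureTheory.volume 0 1 :=
    hcont.intervalIntegrable 0 1
  have heq : ∫ t in (0:ℝ)..1, g' t =
      (G (x + (1:ℝ) • s) - (1:ℝ) • fderiv ℝ G x s) - (G (x + (0:ℝ) • s) - (0:ℝ) • fderiv ℝ G x s) :=
    intervalIntegral.integral_eq_sub_of_hasDerivAt hgd hint
  have heq2 : G (x + s) - G x - fderiv ℝ G x s = ∫ t in (0:ℝ)..1, g' t := by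
    rw [heq]; simp; abel
  rw [heq2]
  have hb : ∀ t ∈ Set.Icc (0:ℝ) 1, ‖g' t‖ ≤ L * ‖s‖ ^ 2 * t := by
    intro t ht
    have : g' t = (fderiv ℝ G (x + t • s) - fderiv ℝ G x) s := by simp [hg']
    rw [this]
    calc ‖(fderiv ℝ G (x + t • s) - fderiv ℝ G x) s‖
        ≤ ‖fderiv ℝ G (x + t • s) - fderiv ℝ G x‖ * ‖s‖ :=
          ContinuousLinearMap.le_opNorm _ s
      _ ≤ (L * (t * ‖s‖)) * ‖s‖ := by
          apply mul_le_mul_of_nonneg_right (hL t ht) (norm_nonneg s)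
      _ = L * ‖s‖ ^ 2 * t := by ring
  calc ‖∫ t in (0:ℝ)..1, g' t‖ ≤ ∫ t in (0:ℝ)..1, ‖g' t‖ :=
        intervalIntegral.norm_integral_le_integral_norm zero_le_one
    _ ≤ ∫ t in (0:ℝ)..1, L * ‖s‖ ^ 2 * t := by
        apply intervalIntegral.integral_mono_on zero_le_one (hcont.norm.intervalIntegrable 0 1)
          ((continuous_const.mul continuous_id).intervalIntegrable 0 1) hb
    _ = L * ‖s‖ ^ 2 / 2 := by
        rw [intervalIntegral.integral_const_mul, integral_id]; ring

/-- Bound on the gradient norm after the second-order negative curvature step,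
under the local Hessian Lipschitz condition (`lam` denotes `λ_min(∇²f(x))`). -/
theorem stmt_15 {n : ℕ} (f : EuclideanSpace ℝ (Fin n) → ℝ)
    (hf : ContDiff ℝ 2 f) (L₀ L₁ δ : ℝ) (hL₀ : 0 ≤ L₀) (hL₁ : 0 ≤ L₁) (hδ : 0 < δ)
    (hLip : ∀ x y : EuclideanSpace ℝ (Fin n), ‖x - y‖ ≤ δ →
      ‖fderiv ℝ (gradient f) y - fderiv ℝ (gradient f) x‖
        ≤ (L₀ + L₁ * ‖gradient f x‖) * ‖x - y‖)
    (x u s : EuclideanSpace ℝ (Fin n)) (σ σmin lam : ℝ)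
    (hgsmall : ‖gradient f x‖ ≤ 1)
    (hσmin : 0 < σmin) (hσ : σmin ≤ σ)
    (hmin : ∀ w : EuclideanSpace ℝ (Fin n), ‖w‖ = 1 →
      lam ≤ (inner ℝ w (fderiv ℝ (gradient f) x w) : ℝ))
    (heig : fderiv ℝ (gradient f) x u = lam • u) (hu : ‖u‖ = 1)
    (hgu : (inner ℝ (gradient f x) u : ℝ) ≤ 0)
    (hs : s = (1 / Real.sqrt σ) • u) (hsδ : ‖s‖ ≤ δ) :
    ‖gradient f (x + s)‖
      ≤ (L₀ + L₁) / (2 * Real.sqrt (σ * σmin)) + 1 + |lam| / Real.sqrt σ := by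
  have hσ0 : 0 < σ := lt_of_lt_of_le hσmin hσ
  have hsq : 0 < Real.sqrt σ := Real.sqrt_pos.mpr hσ0
  set G := gradient f with hGdef
  have hG : ContDiff ℝ 1 G := by
    have h1 : G = fun y => (InnerProductSpace.toDual ℝ _).symm (fderiv ℝ f y) := rfl
    rw [h1]
    exact (InnerProductSpace.toDual ℝ _).symm.contDiff.comp (hf.fderiv_right (by norm_num))
  have hsnorm : ‖s‖ = 1 / Real.sqrt σ := by
    rw [hs, norm_smul, hu, mul_one, Real.norm_eq_abs, abs_of_pos (by positivity)]
  set L := L₀ + L₁ * ‖G x‖ with hLdef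
  have hL : ∀ t ∈ Set.Icc (0:ℝ) 1,
      ‖fderiv ℝ G (x + t • s) - fderiv ℝ G x‖ ≤ L * (t * ‖s‖) := by
    intro t ht
    have hnorm : ‖x - (x + t • s)‖ = t * ‖s‖ := by
      simp [norm_smul, abs_of_nonneg ht.1]
    have h1 : ‖x - (x + t • s)‖ ≤ δ := by
      rw [hnorm]
      calc t * ‖s‖ ≤ 1 * ‖s‖ :=
            mul_le_mul_of_nonneg_right ht.2 (norm_nonneg s)
        _ ≤ δ := by rwa [one_mul]
    have h2 := hLip x (x + t • s) h1
    rwa [hnorm] at h2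
  have key := aux_taylor G hG x s L hL
  have hHs : ‖fderiv ℝ G x s‖ = |lam| / Real.sqrt σ := by
    rw [hs, (fderiv ℝ G x).map_smul, heig, norm_smul, norm_smul, hu, mul_one,
      Real.norm_eq_abs, Real.norm_eq_abs, abs_of_pos (show (0:ℝ) < 1 / Real.sqrt σ by positivity)]
    ring
  have tri : ‖G (x + s)‖ ≤ ‖G (x + s) - G x - fderiv ℝ G x s‖ + ‖G x‖ + ‖fderiv ℝ G x s‖ := by
    have h1 : G (x + s) = (G (x + s) - G x - fderiv ℝ G x s) + G x + fderiv ℝ G x s := by abel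
    calc ‖G (x + s)‖ = ‖(G (x + s) - G x - fderiv ℝ G x s) + G x + fderiv ℝ G x s‖ := by
          rw [← h1]
      _ ≤ _ := norm_add₃_le
  have hsq2 : ‖s‖ ^ 2 = 1 / σ := by
    rw [hsnorm, div_pow, one_pow, Real.sq_sqrt hσ0.le]
  have hL2 : L * ‖s‖ ^ 2 / 2 ≤ (L₀ + L₁) / (2 * Real.sqrt (σ * σmin)) := by
    rw [hsq2]
    have hLle : L ≤ L₀ + L₁ := by
      have : L₁ * ‖G x‖ ≤ L₁ * 1 := mul_le_mul_of_nonneg_left hgsmall hL₁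
      simp only [hLdef]; linarith
    have h0L : 0 ≤ L := by positivity
    have hsqrtle : Real.sqrt (σ * σmin) ≤ σ := by
      have h1 : Real.sqrt (σ * σmin) ≤ Real.sqrt (σ * σ) := Real.sqrt_le_sqrt (by nlinarith)
      rwa [Real.sqrt_mul_self hσ0.le] at h1
    have hsp : 0 < Real.sqrt (σ * σmin) := Real.sqrt_pos.mpr (by positivity)
    have : L * (1 / σ) / 2 = L / (2 * σ) := by ring
    rw [this]
    exact div_le_div₀ (by linarith) hLle (by linarith) (by linarith)
  calc ‖G (x + s)‖ ≤ ‖G (x + s) - G x - fderiv ℝ G x s‖ + ‖G x‖ + ‖fderiv ℝ G x s‖ := tri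
    _ ≤ L * ‖s‖ ^ 2 / 2 + 1 + |lam| / Real.sqrt σ := by
        rw [hHs]; gcongr
    _ ≤ (L₀ + L₁) / (2 * Real.sqrt (σ * σmin)) + 1 + |lam| / Real.sqrt σ := by linarith
end

section
/- Let f : ℝⁿ → ℝ be C² satisfying the local Hessian Lipschitz condition with constants L₀, L₁ ≥ 0 and radius δ > 0, let x with g = ∇f(x) ≠ 0, H = ∇²f(x), σ > 0, and let s satisfy ‖s‖ ≤ min(δ, 1/σ^{1/2}) and −(gᵀs + ½sᵀHs) ≥ σ^{1/2}‖g‖‖s‖² > 0. Then the ratio ρ = (f(x) − f(x+s))/(−(gᵀs + ½sᵀHs)) satisfies 1 − ρ ≤ (L₀/‖g‖ + L₁)/(6σ). -/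
set_option linter.unusedVariables false
set_option linter.unreachableTactic false
set_option linter.unnecessarySeqFocus false
set_option linter.unusedTactic false

theorem cubic_taylor_bound (φ dφ ddφ : ℝ → ℝ) (C : ℝ) (hC : 0 ≤ C)
    (hd : ∀ t, HasDerivAt φ (dφ t) t) (hdd : ∀ t, HasDerivAt dφ (ddφ t) t)
    (hlip : ∀ t ∈ Set.Icc (0:ℝ) 1, ddφ t - ddφ 0 ≤ C * t) :
    φ 1 ≤ φ 0 + dφ 0 + ddφ 0 / 2 + C / 6 := by
  set χ : ℝ → ℝ := fun t => dφ t - dφ 0 - ddφ 0 * t - C * t ^ 2 / 2 with hχ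
  have hχd : ∀ t, HasDerivAt χ (ddφ t - ddφ 0 - C * t) t := by
    intro t
    have h1 : HasDerivAt (fun t : ℝ => ddφ 0 * t) (ddφ 0) t := by
      simpa using (hasDerivAt_id t).const_mul (ddφ 0)
    have h2 : HasDerivAt (fun t : ℝ => C * t ^ 2 / 2) (C * t) t := by
      have := ((hasDerivAt_pow 2 t).const_mul C).div_const 2
      exact this.congr_deriv (by ring)
    have := (((hdd t).sub_const (dφ 0)).sub h1).sub h2
    exact this.congr_deriv (by ring)
  have hχanti : AntitoneOn χ (Set.Icc 0 1) := by
    apply antitoneOn_of_deriv_nonpos (convex_Icc 0 1)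
    · exact fun t _ => ((hχd t).continuousAt).continuousWithinAt
    · exact fun t _ => ((hχd t).differentiableAt).differentiableWithinAt
    · intro t ht
      rw [interior_Icc] at ht
      rw [(hχd t).deriv]
      have := hlip t ⟨le_of_lt ht.1, le_of_lt ht.2⟩
      linarith
  have hχ0 : χ 0 = 0 := by simp [hχ]
  have hχle : ∀ t ∈ Set.Icc (0:ℝ) 1, χ t ≤ 0 := by
    intro t ht
    have := hχanti (Set.left_mem_Icc.2 zero_le_one) ht ht.1
    simpa [hχ0] using this
  set ψ : ℝ → ℝ := fun t => φ t - φ 0 - dφ 0 * t - ddφ 0 * t ^ 2 / 2 - C * t ^ 3 / 6 with hψ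
  have hψd : ∀ t, HasDerivAt ψ (χ t) t := by
    intro t
    have h1 : HasDerivAt (fun t : ℝ => dφ 0 * t) (dφ 0) t := by
      simpa using (hasDerivAt_id t).const_mul (dφ 0)
    have h2 : HasDerivAt (fun t : ℝ => ddφ 0 * t ^ 2 / 2) (ddφ 0 * t) t := by
      have := ((hasDerivAt_pow 2 t).const_mul (ddφ 0)).div_const 2
      exact this.congr_deriv (by ring)
    have h3 : HasDerivAt (fun t : ℝ => C * t ^ 3 / 6) (C * t ^ 2 / 2) t := by
      have := ((hasDerivAt_pow 3 t).const_mul C).div_const 6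
      exact this.congr_deriv (by ring)
    have := ((((hd t).sub_const (φ 0)).sub h1).sub h2).sub h3
    exact this.congr_deriv (by simp [hχ])
  have hψanti : AntitoneOn ψ (Set.Icc 0 1) := by
    apply antitoneOn_of_deriv_nonpos (convex_Icc 0 1)
    · exact fun t _ => ((hψd t).continuousAt).continuousWithinAt
    · exact fun t _ => ((hψd t).differentiableAt).differentiableWithinAt
    · intro t ht
      rw [interior_Icc] at ht
      rw [(hψd t).deriv]
      exact hχle t ⟨le_of_lt ht.1, le_of_lt ht.2⟩
  have := hψanti (Set.left_mem_Icc.2 zero_le_one) (Set.right_mem_Icc.2 zero_le_one) zero_le_one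
  simp only [hψ] at this
  norm_num at this
  linarith

theorem arith_step (L₀ L₁ G S r σ : ℝ) (hL₀ : 0 ≤ L₀) (hL₁ : 0 ≤ L₁)
    (hG : 0 < G) (hS : 0 < S) (hr : 0 < r) (hσ : 0 < σ)
    (hσs : r * r = σ) (hs1 : S * r ≤ 1) :
    ((L₀ + L₁ * G) * S ^ 3 / 6) / (r * G * S ^ 2) ≤ (L₀ / G + L₁) / (6 * σ) := by
  rw [div_le_div_iff₀ (by positivity) (by positivity)]
  have hGe : (L₀ / G + L₁) * (r * G * S ^ 2) = (L₀ + L₁ * G) * (r * S ^ 2) := by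
    field_simp
  rw [hGe, ← hσs]
  nlinarith [mul_nonneg (mul_nonneg (mul_nonneg (add_nonneg hL₀ (mul_nonneg hL₁ hG.le))
    (sq_nonneg S)) hr.le) (by linarith : (0:ℝ) ≤ 1 - S * r)]

/-- Acceptance-ratio bound for a Newton-type step whose model decrease is at
least `√σ ‖g‖ ‖s‖²`, under the local Hessian Lipschitz condition. -/
theorem stmt_16 {n : ℕ} (f : EuclideanSpace ℝ (Fin n) → ℝ)
    (hf : ContDiff ℝ 2 f) (L₀ L₁ δ : ℝ) (hL₀ : 0 ≤ L₀) (hL₁ : 0 ≤ L₁) (hδ : 0 < δ)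
    (hLip : ∀ x y : EuclideanSpace ℝ (Fin n), ‖x - y‖ ≤ δ →
      ‖fderiv ℝ (gradient f) y - fderiv ℝ (gradient f) x‖
        ≤ (L₀ + L₁ * ‖gradient f x‖) * ‖x - y‖)
    (x s : EuclideanSpace ℝ (Fin n)) (σ : ℝ) (hσ : 0 < σ)
    (hg : gradient f x ≠ 0)
    (hsδ : ‖s‖ ≤ min δ (1 / Real.sqrt σ))
    (hdecr : -((inner ℝ (gradient f x) s : ℝ)
        + (1 / 2) * (inner ℝ s (fderiv ℝ (gradient f) x s) : ℝ))
      ≥ Real.sqrt σ * ‖gradient f x‖ * ‖s‖ ^ 2)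
    (hpos : 0 < Real.sqrt σ * ‖gradient f x‖ * ‖s‖ ^ 2) :
    1 - (f x - f (x + s)) / (-((inner ℝ (gradient f x) s : ℝ)
        + (1 / 2) * (inner ℝ s (fderiv ℝ (gradient f) x s) : ℝ)))
      ≤ (L₀ / ‖gradient f x‖ + L₁) / (6 * σ) := by
  have hgn : 0 < ‖gradient f x‖ := norm_pos_iff.2 hg
  have hsqσ : 0 < Real.sqrt σ := Real.sqrt_pos.2 hσ
  have hs0 : 0 < ‖s‖ := by
    rcases eq_or_lt_of_le (norm_nonneg s) with h | h
    · exfalso; rw [← h] at hpos; simp at hpos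
    · exact h
  set L : ℝ := L₀ + L₁ * ‖gradient f x‖ with hLdef
  have hL0 : 0 ≤ L := by positivity
  set C : ℝ := L * ‖s‖ ^ 3 with hCdef
  have hC0 : 0 ≤ C := by positivity
  -- differentiability facts
  have hfd : Differentiable ℝ f := hf.differentiable (by norm_num)
  have hgradc : ContDiff ℝ 1 (gradient f) := by
    have h1 : ContDiff ℝ 1 (fderiv ℝ f) := hf.fderiv_right (by norm_num)
    exact ((InnerProductSpace.toDual ℝ (EuclideanSpace ℝ (Fin n))).symm.contDiff).comp h1
  have hgd : Differentiable ℝ (gradient f) := hgradc.differentiable (by norm_num)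
  have hγ : ∀ t : ℝ, HasDerivAt (fun u : ℝ => x + u • s) s t := by
    intro t
    simpa using ((hasDerivAt_id t).smul_const s).const_add x
  -- the three 1-D functions
  have hd : ∀ t : ℝ, HasDerivAt (fun u : ℝ => f (x + u • s))
      ((fun u : ℝ => (inner ℝ (gradient f (x + u • s)) s : ℝ)) t) t := by
    intro t
    have h1 := ((hfd (x + t • s)).hasFDerivAt).comp_hasDerivAt t (hγ t)
    refine h1.congr_deriv ?_
    unfold gradient
    exact InnerProductSpace.toDual_symm_apply.symm
  have hdd : ∀ t : ℝ, HasDerivAt (fun u : ℝ => (inner ℝ (gradient f (x + u • s)) s : ℝ))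
      ((fun u : ℝ => (inner ℝ s (fderiv ℝ (gradient f) (x + u • s) s) : ℝ)) t) t := by
    intro t
    have h1 := ((hgd (x + t • s)).hasFDerivAt).comp_hasDerivAt t (hγ t)
    have h2 := (innerSL ℝ s).hasFDerivAt.comp_hasDerivAt t h1
    have he : (fun u : ℝ => (inner ℝ (gradient f (x + u • s)) s : ℝ))
        = fun u : ℝ => (innerSL ℝ s) (gradient f (x + u • s)) := by
      funext u
      rw [innerSL_apply_apply]
      exact real_inner_comm _ _
    rw [he]
    exact h2
  -- Lipschitz bound on the second derivative
  have hlip : ∀ t ∈ Set.Icc (0:ℝ) 1,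
      (fun u : ℝ => (inner ℝ s (fderiv ℝ (gradient f) (x + u • s) s) : ℝ)) t
        - (fun u : ℝ => (inner ℝ s (fderiv ℝ (gradient f) (x + u • s) s) : ℝ)) 0 ≤ C * t := by
    intro t ht
    simp only [zero_smul, add_zero]
    have hy : ‖x - (x + t • s)‖ = t * ‖s‖ := by
      have : x - (x + t • s) = -(t • s) := by abel
      rw [this, norm_neg, norm_smul, Real.norm_eq_abs, abs_of_nonneg ht.1]
    have hsδ' : ‖s‖ ≤ δ := le_trans hsδ (min_le_left _ _)
    have hyδ : ‖x - (x + t • s)‖ ≤ δ := by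
      rw [hy]; nlinarith [ht.2, norm_nonneg s]
    have hnorm := hLip x (x + t • s) hyδ
    rw [hy] at hnorm
    set Ht := fderiv ℝ (gradient f) (x + t • s)
    set H := fderiv ℝ (gradient f) x
    have step1 : (inner ℝ s (Ht s) : ℝ) - (inner ℝ s (H s) : ℝ)
        = (inner ℝ s ((Ht - H) s) : ℝ) := by
      rw [ContinuousLinearMap.sub_apply, inner_sub_right]
    rw [step1]
    calc (inner ℝ s ((Ht - H) s) : ℝ) ≤ ‖s‖ * ‖(Ht - H) s‖ := real_inner_le_norm _ _
      _ ≤ ‖s‖ * (‖Ht - H‖ * ‖s‖) := by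
          gcongr
          exact (Ht - H).le_opNorm s
      _ ≤ ‖s‖ * ((L * (t * ‖s‖)) * ‖s‖) := by gcongr
      _ = C * t := by rw [hCdef]; ring
  have key := cubic_taylor_bound _ _ _ C hC0 hd hdd hlip
  simp only [one_smul, zero_smul, add_zero] at key
  -- key : f (x + s) ≤ f x + ⟪g,s⟫ + ⟪s,Hs⟫/2 + C/6
  set A : ℝ := (inner ℝ (gradient f x) s : ℝ) with hA
  set B : ℝ := (inner ℝ s (fderiv ℝ (gradient f) x s) : ℝ) with hB
  set m : ℝ := -(A + (1/2) * B) with hm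
  have hm0 : 0 < m := lt_of_lt_of_le hpos hdecr
  have hmain : f (x + s) - f x + m ≤ C / 6 := by
    rw [hm]; linarith [key]
  have step1 : 1 - (f x - f (x + s)) / m ≤ (C / 6) / m := by
    rw [show (1:ℝ) - (f x - f (x + s)) / m = (m - (f x - f (x + s))) / m by
      field_simp]
    gcongr
    linarith
  have step2 : (C / 6) / m ≤ (C / 6) / (Real.sqrt σ * ‖gradient f x‖ * ‖s‖ ^ 2) := by
    gcongr
  have step3 : (C / 6) / (Real.sqrt σ * ‖gradient f x‖ * ‖s‖ ^ 2)
      ≤ (L₀ / ‖gradient f x‖ + L₁) / (6 * σ) := by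
    have hσs : Real.sqrt σ * Real.sqrt σ = σ := Real.mul_self_sqrt hσ.le
    have hs1 : ‖s‖ * Real.sqrt σ ≤ 1 := by
      have h := le_trans hsδ (min_le_right _ _)
      rw [le_div_iff₀ hsqσ] at h
      exact h
    have := arith_step L₀ L₁ ‖gradient f x‖ ‖s‖ (Real.sqrt σ) σ hL₀ hL₁ hgn hs0 hsqσ hσ hσs hs1
    rw [hCdef, hLdef]
    convert this using 2 <;> try ring
  linarith
end

section
/- Let f : ℝⁿ → ℝ be C² satisfying the local Hessian Lipschitz condition with constants L₀, L₁ ≥ 0 and radius δ > 0, let x with g = ∇f(x) ≠ 0, H = ∇²f(x), σ > 0, and let s satisfy ‖s‖ ≤ δ and −(gᵀs + ½sᵀHs) ≥ (1/2)σ‖g‖‖s‖³ > 0. Then the ratio ρ = (f(x) − f(x+s))/(−(gᵀs + ½sᵀHs)) satisfies 1 − ρ ≤ (L₀/‖g‖ + L₁)/(3σ). -/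
open Set

lemma taylor_bound {n : ℕ} (f : EuclideanSpace ℝ (Fin n) → ℝ) (hf : ContDiff ℝ 2 f)
    (L : ℝ) (x s : EuclideanSpace ℝ (Fin n))
    (hLip : ∀ t : ℝ, t ∈ Icc (0:ℝ) 1 →
      ‖fderiv ℝ (gradient f) (x + t • s) - fderiv ℝ (gradient f) x‖ ≤ L * (t * ‖s‖)) :
    f (x + s) - f x - (inner ℝ (gradient f x) s : ℝ)
      - 1/2 * (inner ℝ s (fderiv ℝ (gradient f) x s) : ℝ) ≤ L/6 * ‖s‖^3 := by
  have hgrad_cd : ContDiff ℝ 1 (gradient f) := by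
    have h1 : ContDiff ℝ 1 (fderiv ℝ f) := hf.fderiv_right (by norm_num)
    exact (InnerProductSpace.toDual ℝ _).symm.contDiff.comp h1
  set H := fderiv ℝ (gradient f) x with hH
  set g := gradient f x with hg
  -- curve derivative helper
  have hcurve : ∀ t : ℝ, HasDerivAt (fun t : ℝ => x + t • s) s t := by
    intro t
    simpa using ((hasDerivAt_id t).smul_const s).const_add x
  have hgd : Differentiable ℝ (gradient f) := hgrad_cd.differentiable (by norm_num)
  have hfd : Differentiable ℝ f := hf.differentiable (by norm_num)
  -- G and its derivative
  set G : ℝ → EuclideanSpace ℝ (Fin n) :=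
    fun t => gradient f (x + t • s) - g - t • (H s) with hGdef
  have hG' : ∀ t : ℝ, HasDerivAt G
      (fderiv ℝ (gradient f) (x + t • s) s - H s) t := by
    intro t
    have h1 : HasDerivAt (fun t : ℝ => gradient f (x + t • s))
        (fderiv ℝ (gradient f) (x + t • s) s) t :=
      by have := ((hgd (x + t • s)).hasFDerivAt).comp_hasDerivAt t (hcurve t); exact this
    convert (h1.sub_const g).sub ((hasDerivAt_id t).smul_const (H s)) using 1
    · rfl
    · rfl
    · rfl
    · rfl
    · simp
  -- bound ‖G t‖ ≤ L/2 * ‖s‖^2 * t^2 on [0,1]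
  have hGbound : ∀ t ∈ Icc (0:ℝ) 1, ‖G t‖ ≤ L/2 * ‖s‖^2 * t^2 := by
    intro t ht
    have hB : ∀ u : ℝ, HasDerivAt (fun u : ℝ => L/2 * ‖s‖^2 * u^2) (L * ‖s‖^2 * u) u := by
      intro u
      have := (hasDerivAt_pow 2 u).const_mul (L/2 * ‖s‖^2)
      convert this using 1
      · rfl
      · rfl
      · push_cast; ring
    refine image_norm_le_of_norm_deriv_right_le_deriv_boundary
      (f := G) (f' := fun u => fderiv ℝ (gradient f) (x + u • s) s - H s)
      (a := 0) (b := 1)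
      (fun u _ => (hG' u).continuousAt.continuousWithinAt)
      (fun u _ => (hG' u).hasDerivWithinAt)
      ?_ hB ?_ ht
    · simp [hGdef, hg]
    · intro u hu
      have hu0 := hu.1
      have hu1 := hu.2.le
      have hlip := hLip u ⟨hu0, hu1⟩
      calc ‖fderiv ℝ (gradient f) (x + u • s) s - H s‖
          = ‖(fderiv ℝ (gradient f) (x + u • s) - H) s‖ := by
            simp [ContinuousLinearMap.sub_apply]
        _ ≤ ‖fderiv ℝ (gradient f) (x + u • s) - H‖ * ‖s‖ :=
            (fderiv ℝ (gradient f) (x + u • s) - H).le_opNorm s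
        _ ≤ L * (u * ‖s‖) * ‖s‖ := by
            apply mul_le_mul_of_nonneg_right hlip (norm_nonneg s)
        _ = L * ‖s‖^2 * u := by ring
  -- scalar function φ
  set φ : ℝ → ℝ := fun t => f (x + t • s) - f x - t * (inner ℝ g s : ℝ)
      - t^2/2 * (inner ℝ s (H s) : ℝ) with hφdef
  have hfder : ∀ y, (fderiv ℝ f y) s = (inner ℝ (gradient f y) s : ℝ) := by
    intro y
    exact (InnerProductSpace.toDual_symm_apply).symm
  have hφ' : ∀ t : ℝ, HasDerivAt φ ((inner ℝ (G t) s : ℝ)) t := by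
    intro t
    have h1 : HasDerivAt (fun t : ℝ => f (x + t • s)) ((fderiv ℝ f (x + t • s)) s) t :=
      ((hfd (x + t • s)).hasFDerivAt).comp_hasDerivAt t (hcurve t)
    have h2 : HasDerivAt φ ((fderiv ℝ f (x + t • s)) s - (inner ℝ g s : ℝ)
        - t * (inner ℝ s (H s) : ℝ)) t := by
      have ha : HasDerivAt (fun t : ℝ => t * (inner ℝ g s : ℝ)) ((inner ℝ g s : ℝ)) t := by
        simpa using (hasDerivAt_id t).mul_const ((inner ℝ g s : ℝ))
      have hb : HasDerivAt (fun t : ℝ => t^2/2 * (inner ℝ s (H s) : ℝ))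
          (t * (inner ℝ s (H s) : ℝ)) t := by
        have := (hasDerivAt_pow 2 t).mul_const ((inner ℝ s (H s) : ℝ) / 2)
        convert this using 1
        · rfl
        · rfl
        · funext u; ring
        · push_cast; ring
      convert ((h1.sub_const (f x)).sub ha).sub hb using 1
      · rfl
      · rfl
      · rfl
    convert h2 using 1
    rw [hfder, hGdef]
    simp [inner_sub_left, inner_smul_left, real_inner_comm s (H s)]
  have hφbound : ∀ t ∈ Icc (0:ℝ) 1, ‖φ t‖ ≤ L/6 * ‖s‖^3 * t^3 := by
    intro t ht
    have hB : ∀ u : ℝ, HasDerivAt (fun u : ℝ => L/6 * ‖s‖^3 * u^3) (L/2 * ‖s‖^3 * u^2) u := by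
      intro u
      have := (hasDerivAt_pow 3 u).const_mul (L/6 * ‖s‖^3)
      convert this using 1
      · rfl
      · rfl
      · push_cast; ring
    refine image_norm_le_of_norm_deriv_right_le_deriv_boundary
      (f := φ) (f' := fun u => (inner ℝ (G u) s : ℝ)) (a := 0) (b := 1)
      (fun u _ => (hφ' u).continuousAt.continuousWithinAt)
      (fun u _ => (hφ' u).hasDerivWithinAt)
      ?_ hB ?_ ht
    · simp [hφdef]
    · intro u hu
      calc ‖(inner ℝ (G u) s : ℝ)‖ ≤ ‖G u‖ * ‖s‖ := by
            rw [Real.norm_eq_abs]; exact abs_real_inner_le_norm _ _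
        _ ≤ (L/2 * ‖s‖^2 * u^2) * ‖s‖ :=
            mul_le_mul_of_nonneg_right (hGbound u ⟨hu.1, hu.2.le⟩) (norm_nonneg s)
        _ = L/2 * ‖s‖^3 * u^2 := by ring
  have := hφbound 1 ⟨zero_le_one, le_rfl⟩
  rw [Real.norm_eq_abs] at this
  have h1 : φ 1 ≤ L/6 * ‖s‖^3 := by
    calc φ 1 ≤ |φ 1| := le_abs_self _
      _ ≤ L/6 * ‖s‖^3 * 1^3 := this
      _ = L/6 * ‖s‖^3 := by ring
  simpa [hφdef] using h1


/-- Acceptance-ratio bound for a negative-curvature-type step whose model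
decrease is at least `(1/2) σ ‖g‖ ‖s‖³`, under the local Hessian Lipschitz
condition. -/
theorem stmt_17 {n : ℕ} (f : EuclideanSpace ℝ (Fin n) → ℝ)
    (hf : ContDiff ℝ 2 f) (L₀ L₁ δ : ℝ) (hL₀ : 0 ≤ L₀) (hL₁ : 0 ≤ L₁) (hδ : 0 < δ)
    (hLip : ∀ x y : EuclideanSpace ℝ (Fin n), ‖x - y‖ ≤ δ →
      ‖fderiv ℝ (gradient f) y - fderiv ℝ (gradient f) x‖
        ≤ (L₀ + L₁ * ‖gradient f x‖) * ‖x - y‖)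
    (x s : EuclideanSpace ℝ (Fin n)) (σ : ℝ) (hσ : 0 < σ)
    (hg : gradient f x ≠ 0)
    (hsδ : ‖s‖ ≤ δ)
    (hdecr : -((inner ℝ (gradient f x) s : ℝ)
        + (1 / 2) * (inner ℝ s (fderiv ℝ (gradient f) x s) : ℝ))
      ≥ (1 / 2) * σ * ‖gradient f x‖ * ‖s‖ ^ 3)
    (hpos : 0 < (1 / 2) * σ * ‖gradient f x‖ * ‖s‖ ^ 3) :
    1 - (f x - f (x + s)) / (-((inner ℝ (gradient f x) s : ℝ)
        + (1 / 2) * (inner ℝ s (fderiv ℝ (gradient f) x s) : ℝ)))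
      ≤ (L₀ / ‖gradient f x‖ + L₁) / (3 * σ) := by
  have hgnorm : 0 < ‖gradient f x‖ := norm_pos_iff.mpr hg
  have hs0 : 0 < ‖s‖ := by
    by_contra h
    push_neg at h
    have : ‖s‖ = 0 := le_antisymm h (norm_nonneg s)
    rw [this] at hpos
    norm_num at hpos
  set L : ℝ := L₀ + L₁ * ‖gradient f x‖ with hL
  have hLnn : 0 ≤ L := by positivity
  have htay : f (x + s) - f x - (inner ℝ (gradient f x) s : ℝ)
      - 1/2 * (inner ℝ s (fderiv ℝ (gradient f) x s) : ℝ) ≤ L/6 * ‖s‖^3 := by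
    apply taylor_bound f hf L x s
    intro t ht
    have hxy : ‖x - (x + t • s)‖ = t * ‖s‖ := by
      rw [show x - (x + t • s) = -(t • s) by abel]
      rw [norm_neg, norm_smul, Real.norm_eq_abs, abs_of_nonneg ht.1]
    have hle : ‖x - (x + t • s)‖ ≤ δ := by
      rw [hxy]
      calc t * ‖s‖ ≤ 1 * ‖s‖ := mul_le_mul_of_nonneg_right ht.2 (norm_nonneg s)
        _ = ‖s‖ := one_mul _
        _ ≤ δ := hsδ
    have := hLip x (x + t • s) hle
    rwa [hxy] at this
  set m : ℝ := -((inner ℝ (gradient f x) s : ℝ)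
      + (1 / 2) * (inner ℝ s (fderiv ℝ (gradient f) x s) : ℝ)) with hm
  set c : ℝ := (1 / 2) * σ * ‖gradient f x‖ * ‖s‖ ^ 3 with hc
  have hmpos : 0 < m := lt_of_lt_of_le hpos hdecr
  have hrw : 1 - (f x - f (x + s)) / m = (f (x + s) - f x + m) / m := by
    field_simp
    ring
  rw [hrw]
  have hψ : f (x + s) - f x + m ≤ L/6 * ‖s‖^3 := by
    rw [hm]; linarith [htay]
  rcases le_or_gt (f (x + s) - f x + m) 0 with hneg | hposψ
  · have h1 : (f (x + s) - f x + m) / m ≤ 0 := div_nonpos_of_nonpos_of_nonneg hneg hmpos.le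
    have h2 : 0 ≤ (L₀ / ‖gradient f x‖ + L₁) / (3 * σ) := by positivity
    linarith
  · have h1 : (f (x + s) - f x + m) / m ≤ (f (x + s) - f x + m) / c :=
      div_le_div_of_nonneg_left hposψ.le hpos hdecr
    have h2 : (f (x + s) - f x + m) / c ≤ (L/6 * ‖s‖^3) / c := by
      gcongr
    have h3 : (L/6 * ‖s‖^3) / c = (L₀ / ‖gradient f x‖ + L₁) / (3 * σ) := by
      rw [hc, hL]
      field_simp
      ring
    linarith
end
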